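/- For q = p^e and p prime, the multinomial coefficient c = (pq-1)! / ((q!)^{p-1} · (q-1)!) is an integer not divisible by p. -/

import Mathlib

open Nat

/-- `(p^(i+k) - 1) / p^i = p^k - 1`. -/
lemma aux_pow_sub_one_div (p i k : ℕ) (hp : 1 ≤ p) :
    (p ^ (i + k) - 1) / p ^ i = p ^ k - 1 := by
  have h1 : 1 ≤ p ^ i := Nat.one_le_pow _ _ hp
  have h2 : 1 ≤ p ^ k := Nat.one_le_pow _ _ hp
  have key : p ^ (i + k) - 1 = p ^ i * (p ^ k - 1) + (p ^ i - 1) := by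
    have : p ^ (i + k) = p ^ i * p ^ k := pow_add p i k
    have hle : p ^ i ≤ p ^ i * p ^ k := Nat.le_mul_of_pos_right _ (by omega)
    rw [Nat.mul_sub, this]
    omega
  rw [key, Nat.mul_add_div (by omega), Nat.div_eq_of_lt (by omega)]
  omega

/-- termwise identity for Legendre sums -/
lemma aux_term (p e i : ℕ) (hp : 2 ≤ p) (hi : 1 ≤ i) :
    (p ^ (e + 1) - 1) / p ^ i = (p - 1) * (p ^ e / p ^ i) + (p ^ e - 1) / p ^ i := by
  rcases le_or_gt i e with h | h
  · obtain ⟨k, rfl⟩ := Nat.exists_eq_add_of_le h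
    have h1 : (p ^ (i + k + 1) - 1) / p ^ i = p ^ (k + 1) - 1 := by
      have := aux_pow_sub_one_div p i (k + 1) (by omega)
      rwa [show i + (k + 1) = i + k + 1 by ring] at this
    have h2 : (p ^ (i + k) - 1) / p ^ i = p ^ k - 1 :=
      aux_pow_sub_one_div p i k (by omega)
    have h3 : p ^ (i + k) / p ^ i = p ^ k := by
      rw [pow_add, Nat.mul_div_cancel_left _ (Nat.pow_pos (n := i) (by omega))]
    rw [h1, h2, h3]
    have hk : 1 ≤ p ^ k := Nat.one_le_pow _ _ (by omega)
    have : p ^ (k + 1) = p * p ^ k := by ring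
    rw [this, Nat.sub_one_mul]
    have hle : p ^ k ≤ p * p ^ k := Nat.le_mul_of_pos_left _ (by omega)
    omega
  · -- i ≥ e + 1, all terms are 0
    have h1 : p ^ (e + 1) ≤ p ^ i := Nat.pow_le_pow_right (by omega) (by omega)
    have h0 : 1 ≤ p ^ e := Nat.one_le_pow _ _ (by omega)
    have h2 : p ^ e < p ^ (e + 1) := Nat.pow_lt_pow_right (by omega) (by omega)
    rw [Nat.div_eq_of_lt (by omega), Nat.div_eq_of_lt (by omega),
      Nat.div_eq_of_lt (by omega)]
    simp

/-- auxiliary divisibility: `(q!)^k * (q-1)! ∣ (k*q + (q-1))!` -/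
lemma aux_dvd (q : ℕ) (hq : 1 ≤ q) : ∀ k : ℕ,
    (q ! ^ k * (q - 1)!) ∣ (k * q + (q - 1))! := by
  intro k
  induction k with
  | zero => simp
  | succ n ih =>
    have h1 : q ! ^ (n + 1) * (q - 1)! = q ! * (q ! ^ n * (q - 1)!) := by ring
    rw [h1]
    calc q ! * (q ! ^ n * (q - 1)!) ∣ q ! * (n * q + (q - 1))! :=
          mul_dvd_mul_left _ ih
      _ ∣ (q + (n * q + (q - 1)))! := Nat.factorial_mul_factorial_dvd_factorial_add _ _
      _ = ((n + 1) * q + (q - 1))! := by ring_nf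

theorem stmt_16 (p e : ℕ) (hp : p.Prime) (q : ℕ) (hq : q = p ^ e) :
    (Nat.factorial q ^ (p - 1) * Nat.factorial (q - 1)) ∣ Nat.factorial (p * q - 1) ∧
    ¬ p ∣ Nat.factorial (p * q - 1) /
        (Nat.factorial q ^ (p - 1) * Nat.factorial (q - 1)) := by
  haveI : Fact p.Prime := ⟨hp⟩
  have hp2 : 2 ≤ p := hp.two_le
  have hq1 : 1 ≤ q := hq ▸ Nat.one_le_pow _ _ (by omega)
  have hdvd : (q ! ^ (p - 1) * (q - 1)!) ∣ (p * q - 1)! := by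
    have := aux_dvd q hq1 (p - 1)
    have heq : (p - 1) * q + (q - 1) = p * q - 1 := by
      have : q ≤ p * q := Nat.le_mul_of_pos_left _ (by omega)
      rw [Nat.sub_one_mul]
      omega
    rwa [heq] at this
  refine ⟨hdvd, ?_⟩
  -- p-adic valuations agree
  have hpq : p * q - 1 = p ^ (e + 1) - 1 := by rw [hq, pow_succ, mul_comm]
  have hval : padicValNat p ((p * q - 1)!) =
      (p - 1) * padicValNat p (q !) + padicValNat p ((q - 1)!) := by
    have hb1 : log p (p ^ (e + 1) - 1) < e + 2 := by
      rcases Nat.eq_zero_or_pos (p ^ (e + 1) - 1) with h | h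
      · rw [h]; simp
      · refine Nat.log_lt_of_lt_pow (by omega) ?_
        calc p ^ (e + 1) - 1 < p ^ (e + 1) := by
              have : 1 ≤ p ^ (e + 1) := Nat.one_le_pow _ _ (by omega)
              omega
          _ ≤ p ^ (e + 2) := Nat.pow_le_pow_right (by omega) (by omega)
    have hb2 : log p (p ^ e) < e + 2 := by
      rw [Nat.log_pow (by omega)]; omega
    have hb3 : log p (p ^ e - 1) < e + 2 := by
      rcases Nat.eq_zero_or_pos (p ^ e - 1) with h | h
      · rw [h]; simp
      · refine Nat.log_lt_of_lt_pow (by omega) ?_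
        calc p ^ e - 1 < p ^ e := by
              have : 1 ≤ p ^ e := Nat.one_le_pow _ _ (by omega)
              omega
          _ ≤ p ^ (e + 2) := Nat.pow_le_pow_right (by omega) (by omega)
    rw [hpq, hq, padicValNat_factorial hb1, padicValNat_factorial hb2,
      padicValNat_factorial hb3, Finset.mul_sum, ← Finset.sum_add_distrib]
    refine Finset.sum_congr rfl fun i hi => ?_
    exact aux_term p e i hp2 (Finset.mem_Ico.mp hi).1
  -- now conclude
  intro hcon
  have hN : ((p * q - 1)!) ≠ 0 := Nat.factorial_ne_zero _
  have hD : (q ! ^ (p - 1) * (q - 1)!) ≠ 0 :=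
    Nat.mul_ne_zero (pow_ne_zero _ (Nat.factorial_ne_zero _)) (Nat.factorial_ne_zero _)
  have hQ : ((p * q - 1)! / (q ! ^ (p - 1) * (q - 1)!)) ≠ 0 := by
    have := Nat.div_pos (Nat.le_of_dvd (Nat.pos_of_ne_zero hN) hdvd)
      (Nat.pos_of_ne_zero hD)
    omega
  have hvq : padicValNat p ((p * q - 1)! / (q ! ^ (p - 1) * (q - 1)!)) = 0 := by
    rw [padicValNat.div_of_dvd hdvd]
    have hDval : padicValNat p (q ! ^ (p - 1) * (q - 1)!) =
        (p - 1) * padicValNat p (q !) + padicValNat p ((q - 1)!) := by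
      rw [padicValNat.mul (pow_ne_zero _ (Nat.factorial_ne_zero _))
        (Nat.factorial_ne_zero _), padicValNat.pow _ _]
    omega
  exact ((dvd_iff_padicValNat_ne_zero hQ).mp hcon) hvq
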